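/- For every h ∈ H¹₀((-1,1)) with h ≠ 0, it holds that 4 ∫_{-1}^{1} |h'(x)|² dx + 2 / (∫_{-1}^{1} h(x)² dx)^{1/2} ≥ 3 π^{2/3}, and equality holds for h(x) = π^{-2/3} cos(πx/2). -/

import Mathlib

open Real MeasureTheory Set


lemma cos_sq_int : (∫ x in (-1:ℝ)..1, Real.cos (π * x / 2) ^ 2) = 1 := by
  have key := intervalIntegral.integral_comp_mul_left (fun y => Real.cos y ^ 2)
    (a := -1) (b := 1) (by positivity : (π/2 : ℝ) ≠ 0)
  have h : (∫ x in (-1:ℝ)..1, Real.cos (π * x / 2) ^ 2)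
      = ∫ x in (-1:ℝ)..1, (fun y => Real.cos y ^ 2) ((π/2) * x) :=
    intervalIntegral.integral_congr fun x _ => by ring_nf
  rw [h, key, integral_cos_sq]
  simp [Real.cos_pi_div_two, Real.pi_ne_zero]

lemma sin_sq_int : (∫ x in (-1:ℝ)..1, Real.sin (π * x / 2) ^ 2) = 1 := by
  have key := intervalIntegral.integral_comp_mul_left (fun y => Real.sin y ^ 2)
    (a := -1) (b := 1) (by positivity : (π/2 : ℝ) ≠ 0)
  have h : (∫ x in (-1:ℝ)..1, Real.sin (π * x / 2) ^ 2)
      = ∫ x in (-1:ℝ)..1, (fun y => Real.sin y ^ 2) ((π/2) * x) :=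
    intervalIntegral.integral_congr fun x _ => by ring_nf
  rw [h, key, integral_sin_sq]
  simp [Real.cos_pi_div_two, Real.pi_ne_zero]

lemma deriv_h0 : deriv (fun x : ℝ => π ^ (-(2:ℝ)/3) * Real.cos (π * x / 2))
    = fun x : ℝ => -(π ^ (-(2:ℝ)/3) * (π/2)) * Real.sin (π * x / 2) := by
  funext x
  have h1 : HasDerivAt (fun x : ℝ => π * x / 2) (π/2) x := by
    simpa using ((hasDerivAt_id x).const_mul π).div_const 2
  have h2 := (h1.cos.const_mul (π ^ (-(2:ℝ)/3)))
  rw [h2.deriv]; ring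

lemma eq_part :
    4 * (∫ x in (-1:ℝ)..1, (deriv (fun x => π ^ (-(2:ℝ)/3) * Real.cos (π * x / 2)) x)^2)
        + 2 / (∫ x in (-1:ℝ)..1, ((π:ℝ) ^ (-(2:ℝ)/3) * Real.cos (π * x / 2))^2) ^ ((1:ℝ)/2)
      = 3 * π ^ ((2:ℝ)/3) := by
  have e1 : (∫ x in (-1:ℝ)..1, (deriv (fun x => π ^ (-(2:ℝ)/3) * Real.cos (π * x / 2)) x)^2)
      = (π ^ (-(2:ℝ)/3) * (π/2))^2 * ∫ x in (-1:ℝ)..1, Real.sin (π * x / 2) ^ 2 := by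
    rw [deriv_h0, ← intervalIntegral.integral_const_mul]
    exact intervalIntegral.integral_congr fun x _ => by ring
  have e2 : (∫ x in (-1:ℝ)..1, ((π:ℝ) ^ (-(2:ℝ)/3) * Real.cos (π * x / 2))^2)
      = (π ^ (-(2:ℝ)/3))^2 * ∫ x in (-1:ℝ)..1, Real.cos (π * x / 2) ^ 2 := by
    rw [← intervalIntegral.integral_const_mul]
    exact intervalIntegral.integral_congr fun x _ => by ring
  rw [e1, e2, sin_sq_int, cos_sq_int, mul_one, mul_one]
  have hp := Real.pi_pos
  have r1 : ((π:ℝ) ^ (-(2:ℝ)/3))^2 = π ^ (-(4:ℝ)/3) := by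
    rw [← Real.rpow_natCast (π ^ (-(2:ℝ)/3)) 2, ← Real.rpow_mul hp.le]; norm_num
  have r2 : ((π:ℝ) ^ (-(4:ℝ)/3)) ^ ((1:ℝ)/2) = π ^ (-(2:ℝ)/3) := by
    rw [← Real.rpow_mul hp.le]; norm_num
  have r3 : (π:ℝ) ^ (-(2:ℝ)/3) * π ^ ((2:ℝ)/3) = 1 := by
    rw [← Real.rpow_add hp]; norm_num
  have r4 : (π:ℝ) ^ (-(4:ℝ)/3) * (π ^ ((2:ℝ)/3) * π ^ ((2:ℝ)/3)) = 1 := by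
    rw [← Real.rpow_add hp, ← Real.rpow_add hp]; norm_num
  rw [r1, r2]
  have hne : (π:ℝ) ^ (-(2:ℝ)/3) ≠ 0 := by positivity
  have r5 : ((π:ℝ) ^ (-(2:ℝ)/3))^2 * π^2 = π ^ ((2:ℝ)/3) := by
    rw [r1, ← Real.rpow_natCast π 2, ← Real.rpow_add hp]; norm_num
  have r6 : ((π:ℝ) ^ (-(2:ℝ)/3) * π)^2 * π ^ (-(2:ℝ)/3) = 1 := by
    rw [mul_pow, r5, mul_comm]; exact r3
  field_simp
  have r3' : (π:ℝ) ^ (-((2:ℝ)/3)) * π ^ ((2:ℝ)/3) = 1 := by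
    rw [← Real.rpow_add hp]; norm_num
  rw [show (-(2:ℝ)/3) = -((2:ℝ)/3) by ring] at r6
  linear_combination 4 * r6 - 12 * r3'

lemma stepA (h : ℝ → ℝ) (hd : Differentiable ℝ h)
    (hi : IntervalIntegrable (fun x => (deriv h x)^2) volume (-1) 1)
    {a : ℝ} (ha : 0 < a) (ha1 : a < 1) :
    (π/2)^2 * (∫ x in (-a)..a, (h x)^2) ≤
      (∫ x in (-a:ℝ)..a, (deriv h x)^2)
        + (π/2) * (h a ^ 2 + h (-a) ^ 2) * Real.tan ((π/2)*a) := by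
  have hp := Real.pi_pos
  set k : ℝ := π/2 with hk
  have hk0 : 0 < k := by positivity
  have hsub : Set.uIcc (-a) a ⊆ Set.uIcc (-1 : ℝ) 1 := by
    rw [Set.uIcc_of_le (by linarith), Set.uIcc_of_le (by linarith)]
    exact Set.Icc_subset_Icc (by linarith) (by linarith)
  have hcos : ∀ x ∈ Set.uIcc (-a) a, 0 < Real.cos (k * x) := by
    intro x hx
    rw [Set.uIcc_of_le (by linarith)] at hx
    apply Real.cos_pos_of_mem_Ioo
    constructor
    · nlinarith [hx.1]
    · nlinarith [hx.2]
  set t : ℝ → ℝ := fun x => Real.tan (k * x) with ht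
  set G' : ℝ → ℝ := fun x => 2 * h x * deriv h x * t x + h x ^ 2 * (1 / Real.cos (k*x) ^ 2 * k)
    with hG'
  -- derivative of G
  have hG : ∀ x ∈ Set.uIcc (-a) a,
      HasDerivAt (fun x => h x ^ 2 * t x) (G' x) x := by
    intro x hx
    have hkx : HasDerivAt (fun x : ℝ => k * x) k x := by
      simpa using (hasDerivAt_id x).const_mul k
    have htan : HasDerivAt t (1 / Real.cos (k*x) ^ 2 * k) x :=
      (Real.hasDerivAt_tan (ne_of_gt (hcos x hx))).comp x hkx
    have hsq : HasDerivAt (fun x => h x ^ 2) (2 * h x * deriv h x) x := by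
      simpa [mul_comm, mul_assoc] using ((hd x).hasDerivAt).fun_pow 2
    simpa [hG', mul_comm, mul_assoc, mul_left_comm] using hsq.fun_mul htan
  -- integrabilities
  have hi' : IntervalIntegrable (fun x => (deriv h x)^2) volume (-a) a := hi.mono_set hsub
  have hmeas : AEStronglyMeasurable (deriv h) (volume.restrict (Set.uIoc (-a) a)) :=
    (measurable_deriv h).aestronglyMeasurable
  have hid : IntervalIntegrable (deriv h) volume (-a) a := by
    refine IntervalIntegrable.mono_fun' (g := fun x => (1 + (deriv h x)^2)/2) ?_ hmeas ?_
    · exact ((intervalIntegrable_const (c := (1:ℝ))).add hi').div_const 2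
    · filter_upwards with x
      have : ((|deriv h x|) - 1)^2 ≥ 0 := sq_nonneg _
      rw [Real.norm_eq_abs]
      nlinarith [abs_nonneg (deriv h x), sq_abs (deriv h x)]
  have htc : ContinuousOn t (Set.uIcc (-a) a) := by
    apply Real.continuousOn_tan.comp ((continuous_const.mul continuous_id).continuousOn)
    intro x hx
    exact ne_of_gt (hcos x hx)
  have hiG' : IntervalIntegrable G' volume (-a) a := by
    apply IntervalIntegrable.add
    · have hcc : ContinuousOn (fun x => 2 * h x * t x) (Set.uIcc (-a) a) :=
        ((continuous_const.mul hd.continuous).continuousOn).mul htc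
      have h2 := hid.continuousOn_mul hcc
      apply h2.congr
      intro x _
      dsimp only
      ring
    · apply ContinuousOn.intervalIntegrable
      apply ContinuousOn.mul ((hd.continuous.pow 2).continuousOn)
      apply ContinuousOn.mul ?_ continuousOn_const
      apply ContinuousOn.div continuousOn_const
      · exact ((Real.continuous_cos.comp (continuous_const.mul continuous_id)).pow 2).continuousOn
      · intro x hx
        exact pow_ne_zero 2 (ne_of_gt (hcos x hx))
  -- FTC
  have hFTC : (∫ x in (-a)..a, G' x) = h a ^ 2 * t a - h (-a) ^ 2 * t (-a) :=
    intervalIntegral.integral_eq_sub_of_hasDerivAt hG hiG'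
  -- pointwise identity
  have hpt : ∀ x ∈ Set.uIcc (-a) a,
      (deriv h x + k * h x * t x)^2 = (deriv h x)^2 - k^2 * h x^2 + k * G' x := by
    intro x hx
    have hc := hcos x hx
    have hsec : 1 / Real.cos (k*x)^2 = 1 + Real.tan (k*x)^2 := by
      rw [one_div, ← Real.inv_one_add_tan_sq (ne_of_gt hc), inv_inv]
    simp only [ht, hG']
    rw [hsec]; ring
  -- put together
  have hnn : 0 ≤ ∫ x in (-a)..a, (deriv h x + k * h x * t x)^2 := by
    apply intervalIntegral.integral_nonneg (by linarith)
    intro u _; positivity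
  have hih2 : IntervalIntegrable (fun x => (h x)^2) volume (-a) a :=
    ((hd.continuous.pow 2).continuousOn).intervalIntegrable
  have hsplit : (∫ x in (-a)..a, (deriv h x + k * h x * t x)^2)
      = (∫ x in (-a:ℝ)..a, (deriv h x)^2) - k^2 * (∫ x in (-a)..a, (h x)^2)
        + k * (∫ x in (-a)..a, G' x) := by
    rw [← intervalIntegral.integral_const_mul, ← intervalIntegral.integral_const_mul,
      ← intervalIntegral.integral_sub hi' (hih2.const_mul _),
      ← intervalIntegral.integral_add (hi'.sub (hih2.const_mul _)) (hiG'.const_mul _)]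
    exact intervalIntegral.integral_congr hpt
  have htneg : t (-a) = - t a := by
    simp only [ht, mul_neg, Real.tan_neg]
  rw [hsplit, hFTC, htneg] at hnn
  have : h a ^ 2 * t a - h (-a) ^ 2 * (- t a) = (h a ^2 + h (-a)^2) * t a := by ring
  rw [this] at hnn
  have : (π/2) * (h a ^ 2 + h (-a) ^ 2) * Real.tan ((π/2)*a) = k * ((h a ^2 + h (-a)^2) * t a) := by
    rw [ht, hk]; ring
  linarith [hnn]

lemma poincare (h : ℝ → ℝ) (hd : Differentiable ℝ h) (hm1 : h (-1) = 0) (hp1 : h 1 = 0)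
    (hi : IntervalIntegrable (fun x => (deriv h x)^2) volume (-1) 1) :
    (π/2)^2 * (∫ x in (-1:ℝ)..1, (h x)^2) ≤ ∫ x in (-1:ℝ)..1, (deriv h x)^2 := by
  have hp := Real.pi_pos
  set I : ℝ := ∫ x in (-1:ℝ)..1, (deriv h x)^2 with hI
  have hih2 : ∀ c d : ℝ, IntervalIntegrable (fun x => (h x)^2) volume c d :=
    fun c d => (hd.continuous.pow 2).intervalIntegrable c d
  -- Step B : ∫_{-a}^a d² ≤ I
  have stepB : ∀ a : ℝ, 0 < a → a < 1 → (∫ x in (-a:ℝ)..a, (deriv h x)^2) ≤ I := by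
    intro a ha ha1
    have m1 : IntervalIntegrable (fun x => (deriv h x)^2) volume (-1) (-a) := by
      apply hi.mono_set
      rw [Set.uIcc_of_le (by linarith), Set.uIcc_of_le (by linarith)]
      exact Set.Icc_subset_Icc (by linarith) (by linarith)
    have m2 : IntervalIntegrable (fun x => (deriv h x)^2) volume (-a) a := by
      apply hi.mono_set
      rw [Set.uIcc_of_le (by linarith), Set.uIcc_of_le (by linarith)]
      exact Set.Icc_subset_Icc (by linarith) (by linarith)
    have m3 : IntervalIntegrable (fun x => (deriv h x)^2) volume a 1 := by
      apply hi.mono_set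
      rw [Set.uIcc_of_le (by linarith), Set.uIcc_of_le (by linarith)]
      exact Set.Icc_subset_Icc (by linarith) (by linarith)
    have e1 := intervalIntegral.integral_add_adjacent_intervals m1 m2
    have e2 := intervalIntegral.integral_add_adjacent_intervals (m1.trans m2) m3
    have n1 : 0 ≤ ∫ x in (-1:ℝ)..(-a), (deriv h x)^2 :=
      intervalIntegral.integral_nonneg (by linarith) (fun u _ => sq_nonneg _)
    have n3 : 0 ≤ ∫ x in (a:ℝ)..1, (deriv h x)^2 :=
      intervalIntegral.integral_nonneg (by linarith) (fun u _ => sq_nonneg _)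
    rw [hI, ← e2, ← e1]
    linarith
  -- combined inequality
  have key : ∀ a : ℝ, a ∈ Set.Ioo (0:ℝ) 1 →
      (π/2)^2 * (∫ x in (-a)..a, (h x)^2) ≤
        I + (π/2) * (h a ^ 2 + h (-a) ^ 2) * Real.tan ((π/2)*a) := by
    intro a ha
    have := stepA h hd hi ha.1 ha.2
    have := stepB a ha.1 ha.2
    linarith
  set l : Filter ℝ := nhdsWithin 1 (Set.Iio 1) with hl
  have hIoo : ∀ᶠ a in l, a ∈ Set.Ioo (0:ℝ) 1 :=
    Ioo_mem_nhdsLT_of_mem (by constructor <;> norm_num)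
  -- L1 : continuity of the LHS
  have L1 : Filter.Tendsto (fun a => (π/2)^2 * ∫ x in (-a)..a, (h x)^2) l
      (nhds ((π/2)^2 * ∫ x in (-1:ℝ)..1, (h x)^2)) := by
    have hP : Continuous (fun b : ℝ => ∫ x in (0:ℝ)..b, (h x)^2) :=
      intervalIntegral.continuous_primitive (fun c d => hih2 c d) 0
    have hΦ : Continuous (fun a : ℝ => ∫ x in (-a)..a, (h x)^2) := by
      have : (fun a : ℝ => ∫ x in (-a)..a, (h x)^2)
          = fun a : ℝ => (∫ x in (0:ℝ)..a, (h x)^2) - ∫ x in (0:ℝ)..(-a), (h x)^2 := by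
        funext a
        rw [intervalIntegral.integral_interval_sub_left (hih2 0 a) (hih2 0 (-a))]
      rw [this]
      exact hP.sub (hP.comp continuous_neg)
    exact ((continuous_const.mul hΦ).tendsto 1).mono_left nhdsWithin_le_nhds
  -- limits of boundary term
  have hslope1 : Filter.Tendsto (slope h 1) l (nhds (deriv h 1)) := by
    have := hasDerivAt_iff_tendsto_slope.mp (hd 1).hasDerivAt
    exact this.mono_left (nhdsWithin_mono 1 (fun x hx => ne_of_lt hx))
  have hslope2 : Filter.Tendsto (fun a => slope h (-1) (-a)) l (nhds (deriv h (-1))) := by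
    have hs := hasDerivAt_iff_tendsto_slope.mp (hd (-1)).hasDerivAt
    have hneg : Filter.Tendsto (fun a : ℝ => -a) l (nhdsWithin (-1) {x | x ≠ -1}) := by
      rw [tendsto_nhdsWithin_iff]
      constructor
      · exact (continuous_neg.tendsto 1).mono_left nhdsWithin_le_nhds
      · filter_upwards [eventually_mem_nhdsWithin] with a ha
        have ha' : a < 1 := ha
        intro hc
        have := neg_injective hc
        exact absurd this (by linarith)
    exact hs.comp hneg
  have hone : Filter.Tendsto (fun a : ℝ => 1 - a) l (nhds 0) := by
    have : Filter.Tendsto (fun a : ℝ => 1 - a) (nhds 1) (nhds (1 - 1)) :=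
      (continuous_const.sub continuous_id).tendsto 1
    simpa using this.mono_left nhdsWithin_le_nhds
  set U : ℝ → ℝ := fun a => (π/2) * ((slope h 1 a)^2 + (slope h (-1) (-a))^2) * (1 - a) with hU
  have LU : Filter.Tendsto U l (nhds 0) := by
    have := (Filter.Tendsto.const_mul (π/2)
      (((hslope1.pow 2).add (hslope2.pow 2)))).mul hone
    simpa using this
  have L2 : Filter.Tendsto (fun a => (π/2) * (h a ^ 2 + h (-a) ^ 2) * Real.tan ((π/2)*a)) l
      (nhds 0) := by
    apply tendsto_of_tendsto_of_tendsto_of_le_of_le' tendsto_const_nhds LU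
    · filter_upwards [hIoo] with a ha
      have htn : 0 ≤ Real.tan ((π/2)*a) :=
        Real.tan_nonneg_of_nonneg_of_le_pi_div_two (by nlinarith [ha.1]) (by nlinarith [ha.2])
      have : 0 ≤ h a ^2 + h (-a)^2 := by positivity
      positivity
    · filter_upwards [hIoo] with a ha
      have hca : 1 - a ≤ Real.cos ((π/2)*a) := by
        have := Real.one_sub_mul_le_cos (x := (π/2)*a) (by nlinarith [ha.1]) (by nlinarith [ha.2])
        have e : 2/π * ((π/2)*a) = a := by field_simp
        rw [e] at this; exact this
      have h1a : 0 < 1 - a := by linarith [ha.2]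
      have htle : Real.tan ((π/2)*a) ≤ 1 / (1-a) := by
        rw [Real.tan_eq_sin_div_cos]
        exact div_le_div₀ zero_le_one (Real.sin_le_one _) h1a hca
      have hsum : 0 ≤ h a ^2 + h (-a)^2 := by positivity
      have step : (π/2) * (h a ^ 2 + h (-a) ^ 2) * Real.tan ((π/2)*a)
          ≤ (π/2) * (h a ^ 2 + h (-a) ^ 2) * (1/(1-a)) := by
        apply mul_le_mul_of_nonneg_left htle (by positivity)
      refine step.trans (le_of_eq ?_)
      have hne : (1:ℝ) - a ≠ 0 := ne_of_gt h1a
      have hne2 : a - 1 ≠ 0 := fun hc => hne (by linarith)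
      have hne3 : -a - (-1) ≠ 0 := fun hc => hne (by linarith)
      simp only [hU]
      rw [slope_def_field, slope_def_field, hp1, hm1]
      rw [show -a - (-1) = 1 - a by ring]
      field_simp
      ring
  -- conclude
  have LR : Filter.Tendsto
      (fun a => I + (π/2) * (h a ^ 2 + h (-a) ^ 2) * Real.tan ((π/2)*a)) l (nhds (I + 0)) :=
    Filter.Tendsto.const_add I L2
  rw [add_zero] at LR
  exact le_of_tendsto_of_tendsto L1 LR (hIoo.mono key)

lemma amgm {S : ℝ} (hS : 0 < S) : 3 * π ^ ((2:ℝ)/3) ≤ π^2 * S + 2 / S ^ ((1:ℝ)/2) := by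
  have hp := Real.pi_pos
  set t : ℝ := S ^ ((1:ℝ)/2) with htd
  have ht : 0 < t := Real.rpow_pos_of_pos hS _
  have ht2 : t^2 = S := by
    rw [htd, ← Real.rpow_natCast (S ^ ((1:ℝ)/2)) 2, ← Real.rpow_mul hS.le]
    norm_num
  set B : ℝ := π ^ ((2:ℝ)/3) with hBd
  have hB : 0 < B := Real.rpow_pos_of_pos hp _
  have hB3 : B ^ 3 = π ^ 2 := by
    rw [hBd, ← Real.rpow_natCast (π ^ ((2:ℝ)/3)) 3, ← Real.rpow_mul hp.le,
      ← Real.rpow_natCast π 2]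
    norm_num
  have h1 : 0 ≤ (B*t - 1)^2 * (B*t + 2) := mul_nonneg (sq_nonneg _) (by positivity)
  have h2 : 3*B - π^2*t^2 ≤ 2 / t := by
    rw [le_div_iff₀ ht]
    have hB3t : B^3 * t^3 = π^2 * t^3 := by rw [hB3]
    nlinarith [h1, hB3t]
  rw [← ht2]
  linarith

theorem stmt_18 :
    (∀ h : ℝ → ℝ, Differentiable ℝ h → h (-1) = 0 → h 1 = 0 →
      IntervalIntegrable (fun x => (deriv h x)^2) volume (-1) 1 →
      0 < (∫ x in (-1:ℝ)..1, (h x)^2) →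
      3 * π ^ ((2:ℝ)/3) ≤
        4 * (∫ x in (-1:ℝ)..1, (deriv h x)^2)
          + 2 / (∫ x in (-1:ℝ)..1, (h x)^2) ^ ((1:ℝ)/2)) ∧
    4 * (∫ x in (-1:ℝ)..1, (deriv (fun x => π ^ (-(2:ℝ)/3) * Real.cos (π * x / 2)) x)^2)
        + 2 / (∫ x in (-1:ℝ)..1, ((π:ℝ) ^ (-(2:ℝ)/3) * Real.cos (π * x / 2))^2) ^ ((1:ℝ)/2)
      = 3 * π ^ ((2:ℝ)/3) := by
  constructor
  · intro h hd hm1 hp1 hi hpos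
    have hP := poincare h hd hm1 hp1 hi
    have hA := amgm hpos
    linarith
  · exact eq_part
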